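/- The Ehrhart polynomial function M ↦ E_{Q(M)}(x) is a valuation under matroid subdivisions. -/

import Mathlib

open Finset
open scoped Pointwise

/-- The indicator vector `e_B ∈ ℝⁿ` of a subset `B ⊆ [n]`. -/
def indVec (n : ℕ) (B : Finset (Fin n)) : Fin n → ℝ := fun i => if i ∈ B then 1 else 0

/-- A collection of subsets of `[n]` is the collection of bases of a matroid
(possibly the empty matroid) iff it satisfies the basis exchange axiom. -/
def IsBases {n : ℕ} (𝓑 : Finset (Finset (Fin n))) : Prop :=
  ∀ B₁ ∈ 𝓑, ∀ B₂ ∈ 𝓑, ∀ b₁ ∈ B₁ \ B₂, ∃ b₂ ∈ B₂ \ B₁, insert b₂ (B₁.erase b₁) ∈ 𝓑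

/-- The matroid (basis) polytope: convex hull of indicator vectors of the bases. -/
def polytope {n : ℕ} (𝓑 : Finset (Finset (Fin n))) : Set (Fin n → ℝ) :=
  convexHull ℝ (indVec n '' ↑𝓑)

/-- A subdivision of a polytope `P` into polytopes `Ps i`: their union is `P`,
their vertices are vertices of `P`, and each pairwise intersection is a proper
(exposed) face of both pieces. -/
def IsSubdivision {n m : ℕ} (P : Set (Fin n → ℝ)) (Ps : Fin m → Set (Fin n → ℝ)) : Prop :=
  (⋃ i, Ps i) = P ∧
  (∀ i, Set.extremePoints ℝ (Ps i) ⊆ Set.extremePoints ℝ P) ∧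
  ∀ i j, i ≠ j →
    IsExposed ℝ (Ps i) (Ps i ∩ Ps j) ∧ IsExposed ℝ (Ps j) (Ps i ∩ Ps j) ∧
    Ps i ∩ Ps j ≠ Ps i ∧ Ps i ∩ Ps j ≠ Ps j

/-- A matroid subdivision of the matroid `𝓑` into the matroids `𝓜 i`. -/
def IsMatroidSubdivision {n m : ℕ} (𝓑 : Finset (Finset (Fin n)))
    (𝓜 : Fin m → Finset (Finset (Fin n))) : Prop :=
  IsBases 𝓑 ∧ (∀ i, IsBases (𝓜 i)) ∧ IsSubdivision (polytope 𝓑) fun i => polytope (𝓜 i)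

open Classical in
/-- For `A ⊆ [m]`, the matroid `M_A` whose polytope is `⋂_{a ∈ A} Q(M_a)`:
its bases are the bases of `M` whose indicator vector lies in every `Q(M_a)`, `a ∈ A`.
For `A = ∅` this is `M` itself. -/
noncomputable def interMatroid {n m : ℕ} (𝓑 : Finset (Finset (Fin n)))
    (𝓜 : Fin m → Finset (Finset (Fin n))) (A : Finset (Fin m)) : Finset (Finset (Fin n)) :=
  𝓑.filter fun B => ∀ a ∈ A, indVec n B ∈ polytope (𝓜 a)

/-- `f` is a valuation under matroid subdivisions:
`∑_{A ⊆ [m]} (-1)^{|A|} f(M_A) = 0` for every matroid subdivision. -/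
def IsValuation {n : ℕ} {G : Type*} [AddCommGroup G] (f : Finset (Finset (Fin n)) → G) : Prop :=
  ∀ (m : ℕ) (𝓑 : Finset (Finset (Fin n))) (𝓜 : Fin m → Finset (Finset (Fin n))),
    IsMatroidSubdivision 𝓑 𝓜 →
    ∑ A : Finset (Fin m), (-1 : ℤ) ^ A.card • f (interMatroid 𝓑 𝓜 A) = 0

open scoped Classical

namespace Aux

variable {n : ℕ}

def cube (n : ℕ) : Set (Fin n → ℝ) := {x | ∀ i, x i ∈ Set.Icc (0:ℝ) 1}

lemma convex_cube : Convex ℝ (cube n) := by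
  have : cube n = Set.pi Set.univ (fun _ => Set.Icc (0:ℝ) 1) := by
    ext x
    simp only [cube, Set.mem_setOf_eq, Set.mem_pi, Set.mem_univ, true_implies]
  rw [this]
  exact convex_pi fun i _ => convex_Icc 0 1

lemma indVec_zero_one (B : Finset (Fin n)) (i : Fin n) :
    indVec n B i = 0 ∨ indVec n B i = 1 := by
  unfold indVec; split <;> simp

lemma indVec_mem_cube (B : Finset (Fin n)) : indVec n B ∈ cube n := by
  intro i; rcases indVec_zero_one B i with h | h <;> rw [h] <;> norm_num

lemma polytope_subset_cube (𝓒 : Finset (Finset (Fin n))) : polytope 𝓒 ⊆ cube n := by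
  apply convexHull_min _ convex_cube
  rintro x ⟨B, _, rfl⟩
  exact indVec_mem_cube B

lemma indVec_injective : Function.Injective (indVec n) := by
  intro B C h
  ext i
  have := congrFun h i
  unfold indVec at this
  by_cases hB : i ∈ B <;> by_cases hC : i ∈ C <;> simp [hB, hC] at this ⊢

lemma indVec_mem_polytope {𝓒 : Finset (Finset (Fin n))} {B : Finset (Fin n)} (hB : B ∈ 𝓒) :
    indVec n B ∈ polytope 𝓒 :=
  subset_convexHull ℝ _ ⟨B, by simpa using hB, rfl⟩

lemma mem_extremePoints_of_zero_one {s : Set (Fin n → ℝ)} {x : Fin n → ℝ}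
    (hs : s ⊆ cube n) (hx : x ∈ s) (h01 : ∀ i, x i = 0 ∨ x i = 1) :
    x ∈ s.extremePoints ℝ := by
  refine ⟨hx, fun y hy z hz hseg => ?_⟩
  obtain ⟨a, b, ha, hb, hab, hxy⟩ := hseg
  have hkey : ∀ i, y i = x i ∧ z i = x i := by
    intro i
    have h1 : a * y i + b * z i = x i := by
      have := congrFun hxy i; simpa using this
    have hy0 := (hs hy i).1; have hy1 := (hs hy i).2
    have hz0 := (hs hz i).1; have hz1 := (hs hz i).2
    rcases h01 i with h | h <;> rw [h] at h1 ⊢ <;> constructor <;> nlinarith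
  refine (?_ : y = x ∧ z = x).1
  constructor <;> funext i
  · exact (hkey i).1
  · exact (hkey i).2

lemma extremePoints_polytope_subset (𝓒 : Finset (Finset (Fin n))) :
    (polytope 𝓒).extremePoints ℝ ⊆ indVec n '' ↑𝓒 :=
  extremePoints_convexHull_subset

lemma mem_of_indVec_mem {𝓒 : Finset (Finset (Fin n))} {B : Finset (Fin n)}
    (hx : indVec n B ∈ polytope 𝓒) : B ∈ 𝓒 := by
  have hext : indVec n B ∈ (polytope 𝓒).extremePoints ℝ :=
    mem_extremePoints_of_zero_one (polytope_subset_cube 𝓒) hx (indVec_zero_one B)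
  obtain ⟨C, hC, hCe⟩ := extremePoints_polytope_subset 𝓒 hext
  rwa [← indVec_injective hCe]

/-- Key geometric lemma: an exposed face of a polytope is the polytope of its vertex set. -/
lemma face_eq_polytope_filter (𝓒 : Finset (Finset (Fin n))) {F : Set (Fin n → ℝ)}
    [DecidablePred fun B : Finset (Fin n) => indVec n B ∈ F]
    (hF : IsExposed ℝ (polytope 𝓒) F) :
    F = polytope (𝓒.filter fun B => indVec n B ∈ F) := by
  have hfin : (indVec n '' (𝓒 : Set (Finset (Fin n)))).Finite := (𝓒.finite_toSet).image _
  have hPcomp : IsCompact (polytope 𝓒) := hfin.isCompact_convexHull ℝ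
  have hFclosed : IsClosed F := hF.isClosed hPcomp.isClosed
  have hFcomp : IsCompact F := hF.isCompact hPcomp
  have hFconv : Convex ℝ F := hF.convex (convex_convexHull ℝ _)
  have hext : F.extremePoints ℝ = indVec n '' ↑(𝓒.filter fun B => indVec n B ∈ F) := by
    apply Set.Subset.antisymm
    · intro x hx
      obtain ⟨B, hB, rfl⟩ := extremePoints_polytope_subset 𝓒
        (hF.isExtreme.extremePoints_subset_extremePoints hx)
      exact ⟨B, by simpa using ⟨hB, extremePoints_subset hx⟩, rfl⟩
    · rintro x ⟨B, hB, rfl⟩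
      simp only [coe_filter, Set.mem_setOf_eq] at hB
      exact mem_extremePoints_of_zero_one
        (hF.subset.trans (polytope_subset_cube 𝓒)) hB.2 (indVec_zero_one B)
  have hKM := closure_convexHull_extremePoints hFcomp hFconv
  have hclosed2 : IsClosed (polytope (𝓒.filter fun B => indVec n B ∈ F)) :=
    (Set.Finite.image _ (Finset.finite_toSet _)).isClosed_convexHull ℝ
  conv_lhs => rw [← hKM, hext]
  exact hclosed2.closure_eq

theorem sym_exchange {α : Type*} (M : Matroid α) {B₁ B₂ : Set α} (h₁ : M.IsBase B₁)
    (h₂ : M.IsBase B₂) (hfin : B₂.Finite) {e : α} (he : e ∈ B₁ \ B₂) :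
    ∃ f ∈ B₂ \ B₁, M.IsBase (insert f (B₁ \ {e})) ∧ M.IsBase (insert e (B₂ \ {f})) := by
  have heE : e ∈ M.E := h₁.subset_ground he.1
  have hecl : e ∈ M.closure B₂ := by rw [h₂.closure_eq]; exact heE
  set 𝒮 := hfin.toFinset.powerset.filter (fun S : Finset α => e ∈ M.closure (S : Set α)) with h𝒮
  have h𝒮ne : 𝒮.Nonempty := by
    refine ⟨hfin.toFinset, Finset.mem_filter.2 ⟨Finset.mem_powerset_self _, ?_⟩⟩
    rwa [Set.Finite.coe_toFinset]
  obtain ⟨S, hS, hSmin⟩ := Finset.exists_min_image 𝒮 Finset.card h𝒮ne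
  rw [h𝒮, Finset.mem_filter, Finset.mem_powerset] at hS
  have hSB₂ : (S : Set α) ⊆ B₂ := by
    intro x hx
    have := hS.1 hx
    rwa [Set.Finite.mem_toFinset] at this
  have key : ∀ x ∈ S, e ∉ M.closure (B₂ \ {x}) := by
    intro x hx hcon
    have h1 : e ∉ M.closure ↑(S.erase x) := by
      intro hmem
      have hm : S.erase x ∈ 𝒮 := by
        rw [h𝒮, Finset.mem_filter, Finset.mem_powerset]
        exact ⟨(Finset.erase_subset x S).trans hS.1, hmem⟩
      have hle := hSmin _ hm
      have hlt := Finset.card_erase_lt_of_mem hx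
      omega
    have h2 : e ∈ M.closure (insert x ↑(S.erase x)) := by
      rw [Finset.coe_erase, Set.insert_diff_singleton, Set.insert_eq_of_mem (Finset.mem_coe.2 hx)]
      exact hS.2
    have h3 : x ∈ M.closure (insert e ↑(S.erase x)) := Matroid.mem_closure_insert h1 h2
    have h4 : M.closure (insert e ↑(S.erase x)) ⊆ M.closure (insert e (B₂ \ {x})) := by
      apply M.closure_subset_closure
      apply Set.insert_subset_insert
      rw [Finset.coe_erase]
      exact Set.diff_subset_diff_left hSB₂
    have h5 : M.closure (insert e (B₂ \ {x})) = M.closure (B₂ \ {x}) :=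
      Matroid.closure_insert_eq_of_mem_closure hcon
    have h6 : x ∈ M.closure (B₂ \ {x}) := h5 ▸ h4 h3
    exact h₂.indep.notMem_closure_diff_of_mem (hSB₂ hx) h6
  have hnotall : ¬ ((S : Set α) ⊆ M.closure (B₁ \ {e})) := by
    intro hsub
    have := M.closure_subset_closure_of_subset_closure hsub
    exact h₁.indep.notMem_closure_diff_of_mem he.1 (this hS.2)
  obtain ⟨f, hfS, hfncl⟩ := Set.not_subset.1 hnotall
  have hfS' : f ∈ S := hfS
  have hfB₂ : f ∈ B₂ := hSB₂ hfS
  have hfne : f ≠ e := fun h => he.2 (h ▸ hfB₂)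
  have hfB₁ : f ∉ B₁ := by
    intro h
    exact hfncl (M.subset_closure (B₁ \ {e})
      ((Set.diff_subset).trans h₁.subset_ground) ⟨h, hfne⟩)
  have hB₁e : M.Indep (B₁ \ {e}) := h₁.indep.diff _
  have hfE : f ∈ M.E := h₂.subset_ground hfB₂
  have hind1 : M.Indep (insert f (B₁ \ {e})) := by
    rw [hB₁e.insert_indep_iff]
    exact Or.inl ⟨hfE, hfncl⟩
  have hbase1 : M.IsBase (insert f (B₁ \ {e})) := h₁.exchange_isBase_of_indep hfB₁ hind1
  have hencl : e ∉ M.closure (B₂ \ {f}) := key f hfS'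
  have hB₂f : M.Indep (B₂ \ {f}) := h₂.indep.diff _
  have hind2 : M.Indep (insert e (B₂ \ {f})) := by
    rw [hB₂f.insert_indep_iff]
    exact Or.inl ⟨heE, hencl⟩
  have hbase2 : M.IsBase (insert e (B₂ \ {f})) := h₂.exchange_isBase_of_indep he.2 hind2
  exact ⟨f, ⟨hfB₂, hfB₁⟩, hbase1, hbase2⟩

lemma indVec_insert {a : Fin n} {B : Finset (Fin n)} (h : a ∉ B) :
    indVec n (insert a B) = indVec n B + Pi.single a 1 := by
  funext i
  by_cases hia : i = a
  · subst hia; simp [indVec, h]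
  · simp [indVec, hia, Pi.single_apply, Finset.mem_insert]

lemma indVec_erase {a : Fin n} {B : Finset (Fin n)} (h : a ∈ B) :
    indVec n (B.erase a) = indVec n B - Pi.single a 1 := by
  funext i
  by_cases hia : i = a
  · subst hia; simp [indVec, h]
  · simp [indVec, hia, Pi.single_apply, Finset.mem_erase]

lemma le_on_convexHull {s : Set (Fin n → ℝ)} {c : ℝ} (l : (Fin n → ℝ) →L[ℝ] ℝ)
    (h : ∀ z ∈ s, l z ≤ c) {y : Fin n → ℝ} (hy : y ∈ convexHull ℝ s) : l y ≤ c := by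
  have hconv : Convex ℝ {z : Fin n → ℝ | l z ≤ c} :=
    convex_halfSpace_le ⟨l.map_add, l.map_smul⟩ c
  exact convexHull_min h hconv hy

/-- The bases-with-exchange family, as a mathlib matroid. -/
noncomputable def toMatroid (𝓒 : Finset (Finset (Fin n))) (h : IsBases 𝓒) (hne : 𝓒.Nonempty) :
    Matroid (Fin n) :=
  Matroid.ofIsBaseOfFinite Set.finite_univ (fun S => ∃ B ∈ 𝓒, (B : Set (Fin n)) = S)
    ⟨(hne.choose : Finset (Fin n)), hne.choose, hne.choose_spec, rfl⟩
    (by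
      rintro X Y ⟨B₁, hB₁, rfl⟩ ⟨B₂, hB₂, rfl⟩ a ha
      have ha' : a ∈ B₁ \ B₂ := by
        rw [Finset.mem_sdiff]; exact ⟨by exact_mod_cast ha.1, by exact_mod_cast ha.2⟩
      obtain ⟨b, hb, hbase⟩ := h B₁ hB₁ B₂ hB₂ a ha'
      rw [Finset.mem_sdiff] at hb
      refine ⟨b, ⟨by exact_mod_cast hb.1, by exact_mod_cast hb.2⟩, insert b (B₁.erase a), hbase, ?_⟩
      push_cast
      rfl)
    (fun B _ => Set.subset_univ _)

lemma toMatroid_base {𝓒 : Finset (Finset (Fin n))} {h : IsBases 𝓒} {hne : 𝓒.Nonempty}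
    {S : Set (Fin n)} : (toMatroid 𝓒 h hne).IsBase S ↔ ∃ B ∈ 𝓒, (B : Set (Fin n)) = S := by
  exact Iff.rfl

/-- Symmetric exchange for `IsBases` families. -/
lemma isBases_sym_exchange {𝓒 : Finset (Finset (Fin n))} (h : IsBases 𝓒)
    {B₁ B₂ : Finset (Fin n)} (h₁ : B₁ ∈ 𝓒) (h₂ : B₂ ∈ 𝓒) {e : Fin n} (he : e ∈ B₁ \ B₂) :
    ∃ f ∈ B₂ \ B₁, insert f (B₁.erase e) ∈ 𝓒 ∧ insert e (B₂.erase f) ∈ 𝓒 := by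
  have hne : 𝓒.Nonempty := ⟨B₁, h₁⟩
  set M := toMatroid 𝓒 h hne with hM
  have hb₁ : M.IsBase ↑B₁ := toMatroid_base.2 ⟨B₁, h₁, rfl⟩
  have hb₂ : M.IsBase ↑B₂ := toMatroid_base.2 ⟨B₂, h₂, rfl⟩
  rw [Finset.mem_sdiff] at he
  have he' : e ∈ (B₁ : Set (Fin n)) \ ↑B₂ :=
    ⟨by exact_mod_cast he.1, by intro hh; exact he.2 (by exact_mod_cast hh)⟩
  obtain ⟨f, hf, hc₁, hc₂⟩ := sym_exchange M hb₁ hb₂ B₂.finite_toSet he'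
  have hfB₂ : f ∈ B₂ := by exact_mod_cast hf.1
  have hfB₁ : f ∉ B₁ := by intro hh; exact hf.2 (by exact_mod_cast hh)
  obtain ⟨C₁, hC₁, hC₁e⟩ := toMatroid_base.1 hc₁
  obtain ⟨C₂, hC₂, hC₂e⟩ := toMatroid_base.1 hc₂
  have e₁ : C₁ = insert f (B₁.erase e) := by
    apply Finset.coe_injective
    rw [hC₁e]; push_cast; rfl
  have e₂ : C₂ = insert e (B₂.erase f) := by
    apply Finset.coe_injective
    rw [hC₂e]; push_cast; rfl
  exact ⟨f, Finset.mem_sdiff.2 ⟨hfB₂, hfB₁⟩, e₁ ▸ hC₁, e₂ ▸ hC₂⟩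

lemma isBases_filter_face {𝓒 : Finset (Finset (Fin n))} (h𝓒 : IsBases 𝓒) {F : Set (Fin n → ℝ)}
    [DecidablePred fun B : Finset (Fin n) => indVec n B ∈ F]
    (hF : IsExposed ℝ (polytope 𝓒) F) :
    IsBases (𝓒.filter fun B => indVec n B ∈ F) := by
  intro B₁ h₁ B₂ h₂ b₁ hb₁
  rw [Finset.mem_filter] at h₁ h₂
  obtain ⟨l, hl⟩ := hF ⟨_, h₁.2⟩
  have hmax₁ : ∀ y ∈ polytope 𝓒, l y ≤ l (indVec n B₁) := by
    have := h₁.2; rw [hl] at this; exact this.2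
  have hmax₂ : ∀ y ∈ polytope 𝓒, l y ≤ l (indVec n B₂) := by
    have := h₂.2; rw [hl] at this; exact this.2
  obtain ⟨f, hf, hc₁, hc₂⟩ := isBases_sym_exchange h𝓒 h₁.1 h₂.1 hb₁
  rw [Finset.mem_sdiff] at hb₁ hf
  have hfe : f ∉ B₁.erase b₁ := fun hh => hf.2 (Finset.erase_subset _ _ hh)
  have hbe : b₁ ∉ B₂.erase f := fun hh => hb₁.2 (Finset.erase_subset _ _ hh)
  have key₁ : l (indVec n (insert f (B₁.erase b₁)))
      = l (indVec n B₁) - l (Pi.single b₁ 1) + l (Pi.single f 1) := by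
    rw [indVec_insert hfe, indVec_erase hb₁.1, map_add, map_sub]
  have key₂ : l (indVec n (insert b₁ (B₂.erase f)))
      = l (indVec n B₂) - l (Pi.single f 1) + l (Pi.single b₁ 1) := by
    rw [indVec_insert hbe, indVec_erase hf.1, map_add, map_sub]
  have le₁ : l (indVec n (insert f (B₁.erase b₁))) ≤ l (indVec n B₁) :=
    hmax₁ _ (indVec_mem_polytope hc₁)
  have le₂ : l (indVec n (insert b₁ (B₂.erase f))) ≤ l (indVec n B₂) :=
    hmax₂ _ (indVec_mem_polytope hc₂)
  have heq : l (indVec n (insert f (B₁.erase b₁))) = l (indVec n B₁) := by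
    rw [key₁]; rw [key₁] at le₁; rw [key₂] at le₂; linarith
  have hmem : indVec n (insert f (B₁.erase b₁)) ∈ F := by
    rw [hl]
    exact ⟨indVec_mem_polytope hc₁, fun y hy => (hmax₁ y hy).trans heq.ge⟩
  exact ⟨f, Finset.mem_sdiff.2 hf, Finset.mem_filter.2 ⟨hc₁, hmem⟩⟩

variable {m : ℕ} {𝓑 : Finset (Finset (Fin n))} {𝓜 : Fin m → Finset (Finset (Fin n))}

lemma exposed_inter_pieces (hsub : IsMatroidSubdivision 𝓑 𝓜) (a0 : Fin m) (A : Finset (Fin m)) :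
    IsExposed ℝ (polytope (𝓜 a0)) (polytope (𝓜 a0) ∩ ⋂ a ∈ A, polytope (𝓜 a)) := by
  induction A using Finset.induction_on with
  | empty =>
      simp only [Finset.notMem_empty, Set.iInter_of_empty, Set.iInter_univ, Set.inter_univ]
      exact IsExposed.refl _
  | @insert a A ha IH =>
      rw [Finset.set_biInter_insert, Set.inter_inter_distrib_left]
      refine IsExposed.inter ?_ IH
      by_cases haa : a = a0
      · subst haa; rw [Set.inter_self]
      · exact (hsub.2.2.2.2 a0 a fun hh => haa hh.symm).1

lemma piece_subset (hsub : IsMatroidSubdivision 𝓑 𝓜) (a : Fin m) :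
    polytope (𝓜 a) ⊆ polytope 𝓑 := by
  have h := hsub.2.2.1
  intro x hx
  rw [← h]
  exact Set.mem_iUnion.2 ⟨a, hx⟩

lemma M_subset (hsub : IsMatroidSubdivision 𝓑 𝓜) (a : Fin m) : 𝓜 a ⊆ 𝓑 := by
  intro B hB
  exact mem_of_indVec_mem (extremePoints_subset (hsub.2.2.2.1 a
    (mem_extremePoints_of_zero_one (polytope_subset_cube _)
      (indVec_mem_polytope hB) (indVec_zero_one B))))

lemma interMatroid_props (hsub : IsMatroidSubdivision 𝓑 𝓜) (A : Finset (Fin m)) :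
    IsBases (interMatroid 𝓑 𝓜 A) ∧
    polytope (interMatroid 𝓑 𝓜 A) = polytope 𝓑 ∩ ⋂ a ∈ A, polytope (𝓜 a) := by
  rcases A.eq_empty_or_nonempty with rfl | ⟨a0, ha0⟩
  · have h0 : interMatroid 𝓑 𝓜 ∅ = 𝓑 := by
      unfold interMatroid
      apply Finset.filter_true_of_mem
      intro B _ a ha
      exact absurd ha (Finset.notMem_empty a)
    rw [h0]
    refine ⟨hsub.1, ?_⟩
    simp
  · set F := polytope (𝓜 a0) ∩ ⋂ a ∈ A, polytope (𝓜 a) with hFdef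
    have hFsub : (⋂ a ∈ A, polytope (𝓜 a)) ⊆ polytope (𝓜 a0) :=
      Set.biInter_subset_of_mem ha0
    have hFeq : F = ⋂ a ∈ A, polytope (𝓜 a) := Set.inter_eq_self_of_subset_right hFsub
    have hexp := exposed_inter_pieces hsub a0 A
    have hfilter : interMatroid 𝓑 𝓜 A = (𝓜 a0).filter fun B => indVec n B ∈ F := by
      ext B
      unfold interMatroid
      simp only [Finset.mem_filter]
      constructor
      · rintro ⟨hB𝓑, hall⟩
        have hmem : indVec n B ∈ F := by
          rw [hFeq, Set.mem_iInter₂]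
          exact hall
        exact ⟨mem_of_indVec_mem (hall a0 ha0), hmem⟩
      · rintro ⟨hB, hmem⟩
        rw [hFeq, Set.mem_iInter₂] at hmem
        exact ⟨M_subset hsub a0 hB, hmem⟩
    constructor
    · rw [hfilter]
      exact isBases_filter_face (hsub.2.1 a0) hexp
    · rw [hfilter, ← face_eq_polytope_filter _ hexp,
        Set.inter_eq_self_of_subset_right hFsub,
        Set.inter_eq_self_of_subset_right (hFsub.trans (piece_subset hsub a0))]

end Aux


/-- The Ehrhart polynomial `M ↦ E_{Q(M)}(x)` is a valuation: any assignment of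
polynomials `p(M)` satisfying `p(M)(k) = |k·Q(M) ∩ ℤⁿ|` for all matroids `M` and
positive integers `k` is a valuation under matroid subdivisions. -/
theorem statement_11 (n : ℕ) (p : Finset (Finset (Fin n)) → Polynomial ℚ)
    (hp : ∀ 𝓑 : Finset (Finset (Fin n)), IsBases 𝓑 → ∀ k : ℕ, 0 < k →
      (p 𝓑).eval (k : ℚ) =
        Nat.card {x : Fin n → ℝ // x ∈ (k : ℝ) • polytope 𝓑 ∧ ∀ i, ∃ z : ℤ, x i = (z : ℝ)}) :
    IsValuation p := by
  classical
  intro m 𝓑 𝓜 hsub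
  have hprops := fun A => Aux.interMatroid_props hsub A
  apply Polynomial.eq_zero_of_infinite_isRoot
  apply Set.infinite_of_injective_forall_mem (f := fun k : ℕ => ((k + 1 : ℕ) : ℚ))
  · intro a b hab
    have : (a + 1 : ℕ) = (b + 1 : ℕ) := Nat.cast_injective hab
    omega
  · intro k
    show Polynomial.IsRoot _ _
    rw [Polynomial.IsRoot.def]
    set K : ℕ := k + 1 with hK
    have hKpos : 0 < K := Nat.succ_pos k
    have hKR : ((K : ℕ) : ℝ) ≠ 0 := by positivity
    -- the finite set of lattice points in K • (polytope 𝓑)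
    have hPfin : {x : Fin n → ℝ | x ∈ (K : ℝ) • polytope 𝓑 ∧ ∀ i, ∃ z : ℤ, x i = (z : ℝ)}.Finite := by
      apply Set.Finite.subset (Set.Finite.image (fun z : Fin n → ℤ => fun i => (z i : ℝ))
        (Set.Finite.pi' (fun i => Set.finite_Icc (0:ℤ) K)))
      rintro x ⟨hx1, hx2⟩
      choose z hz using hx2
      refine ⟨z, ?_, (funext hz).symm⟩
      intro i
      obtain ⟨y, hy, hyx⟩ := hx1
      have hyc := Aux.polytope_subset_cube 𝓑 hy i
      have h0 : (0:ℝ) ≤ x i := by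
        rw [← hyx]
        simp only [Pi.smul_apply, smul_eq_mul]
        have : (0:ℝ) ≤ (K:ℝ) := by positivity
        nlinarith [hyc.1]
      have h1 : x i ≤ (K:ℝ) := by
        rw [← hyx]
        simp only [Pi.smul_apply, smul_eq_mul]
        have hK0 : (0:ℝ) ≤ (K:ℝ) := by positivity
        nlinarith [hyc.2]
      rw [hz i] at h0 h1
      constructor
      · exact_mod_cast h0
      · exact_mod_cast h1
    set WF := hPfin.toFinset with hWF
    -- counting lattice points of each `interMatroid` polytope inside `WF`
    have hcard : ∀ A : Finset (Fin m),
        ((Nat.card {x : Fin n → ℝ // x ∈ (K : ℝ) • polytope (interMatroid 𝓑 𝓜 A)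
            ∧ ∀ i, ∃ z : ℤ, x i = (z : ℝ)} : ℕ) : ℚ)
        = ∑ x ∈ WF, (if ∀ a ∈ A, x ∈ (K : ℝ) • polytope (𝓜 a) then (1:ℚ) else 0) := by
      intro A
      rw [Finset.sum_boole]
      have hseteq : {x : Fin n → ℝ | x ∈ (K : ℝ) • polytope (interMatroid 𝓑 𝓜 A)
            ∧ ∀ i, ∃ z : ℤ, x i = (z : ℝ)}
          = ↑(WF.filter fun x => ∀ a ∈ A, x ∈ (K : ℝ) • polytope (𝓜 a)) := by
        ext x
        simp only [Set.mem_setOf_eq, Finset.coe_filter, hWF, Set.Finite.mem_toFinset]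
        rw [(hprops A).2]
        constructor
        · rintro ⟨hx1, hx2⟩
          rw [Set.mem_smul_set_iff_inv_smul_mem₀ hKR, Set.mem_inter_iff] at hx1
          refine ⟨⟨?_, hx2⟩, ?_⟩
          · rw [Set.mem_smul_set_iff_inv_smul_mem₀ hKR]; exact hx1.1
          · intro a ha
            rw [Set.mem_smul_set_iff_inv_smul_mem₀ hKR]
            exact Set.mem_iInter₂.1 hx1.2 a ha
        · rintro ⟨⟨hx1, hx2⟩, hcond⟩
          refine ⟨?_, hx2⟩
          rw [Set.mem_smul_set_iff_inv_smul_mem₀ hKR] at hx1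
          rw [Set.mem_smul_set_iff_inv_smul_mem₀ hKR, Set.mem_inter_iff]
          refine ⟨hx1, Set.mem_iInter₂.2 fun a ha => ?_⟩
          have := hcond a ha
          rwa [Set.mem_smul_set_iff_inv_smul_mem₀ hKR] at this
      have h1 : Nat.card {x : Fin n → ℝ // x ∈ (K : ℝ) • polytope (interMatroid 𝓑 𝓜 A)
            ∧ ∀ i, ∃ z : ℤ, x i = (z : ℝ)}
          = ({x : Fin n → ℝ | x ∈ (K : ℝ) • polytope (interMatroid 𝓑 𝓜 A)
            ∧ ∀ i, ∃ z : ℤ, x i = (z : ℝ)}).ncard := Nat.card_coe_set_eq _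
      rw [h1, hseteq, Set.ncard_coe_finset]
    -- per lattice point, inclusion-exclusion vanishes
    have hpoint : ∀ x ∈ WF, ∑ A : Finset (Fin m),
        ((-1:ℚ)^A.card * if ∀ a ∈ A, x ∈ (K : ℝ) • polytope (𝓜 a) then (1:ℚ) else 0) = 0 := by
      intro x hx
      rw [hWF, Set.Finite.mem_toFinset] at hx
      obtain ⟨j, hj⟩ : ∃ j, x ∈ (K : ℝ) • polytope (𝓜 j) := by
        have hxW := hx.1
        rw [Set.mem_smul_set_iff_inv_smul_mem₀ hKR, ← hsub.2.2.1, Set.mem_iUnion] at hxW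
        obtain ⟨j, hj⟩ := hxW
        exact ⟨j, by rw [Set.mem_smul_set_iff_inv_smul_mem₀ hKR]; exact hj⟩
      have hexp : ∏ i : Fin m, ((-(if x ∈ (K : ℝ) • polytope (𝓜 i) then (1:ℚ) else 0)) + 1)
          = ∑ A : Finset (Fin m),
            ((-1:ℚ)^A.card * if ∀ a ∈ A, x ∈ (K : ℝ) • polytope (𝓜 a) then (1:ℚ) else 0) := by
        rw [Finset.prod_add, Finset.powerset_univ]
        apply Finset.sum_congr rfl
        intro A _
        rw [Finset.prod_const_one, mul_one]
        have : ∏ a ∈ A, (-(if x ∈ (K : ℝ) • polytope (𝓜 a) then (1:ℚ) else 0))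
            = (-1:ℚ)^A.card * ∏ a ∈ A, (if x ∈ (K : ℝ) • polytope (𝓜 a) then (1:ℚ) else 0) := by
          rw [← Finset.prod_const, ← Finset.prod_mul_distrib]
          apply Finset.prod_congr rfl
          intro a _
          ring
        rw [this, Finset.prod_boole]
        congr 1
        simp
      rw [← hexp]
      exact Finset.prod_eq_zero (Finset.mem_univ j) (by rw [if_pos hj]; ring)
    -- assemble
    rw [Polynomial.eval_finset_sum]
    have step : ∀ A : Finset (Fin m), (((-1:ℤ)^A.card • p (interMatroid 𝓑 𝓜 A)).eval ((K:ℕ):ℚ))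
        = ∑ x ∈ WF, ((-1:ℚ)^A.card * if ∀ a ∈ A, x ∈ (K : ℝ) • polytope (𝓜 a) then (1:ℚ) else 0) := by
      intro A
      rw [zsmul_eq_mul, Polynomial.eval_mul, Polynomial.eval_intCast,
        hp _ (hprops A).1 K hKpos, hcard A, Finset.mul_sum]
      push_cast
      rw [Finset.sum_congr rfl fun x _ => mul_comm _ _]
    calc ∑ A : Finset (Fin m), (((-1:ℤ)^A.card • p (interMatroid 𝓑 𝓜 A)).eval ((K:ℕ):ℚ))
        = ∑ A : Finset (Fin m), ∑ x ∈ WF,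
            ((-1:ℚ)^A.card * if ∀ a ∈ A, x ∈ (K : ℝ) • polytope (𝓜 a) then (1:ℚ) else 0) :=
          Finset.sum_congr rfl fun A _ => step A
      _ = ∑ x ∈ WF, ∑ A : Finset (Fin m),
            ((-1:ℚ)^A.card * if ∀ a ∈ A, x ∈ (K : ℝ) • polytope (𝓜 a) then (1:ℚ) else 0) :=
          Finset.sum_comm
      _ = 0 := Finset.sum_eq_zero hpoint
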